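/- Consider the constraint system x ∈ D, g(x) ∈ K, with associated mapping F(x) := K − g(x) for x ∈ D and F(x) := ∅ otherwise, where D ⊆ ℝⁿ and K ⊆ ℝᵐ are closed, g: ℝⁿ → ℝᵐ is continuously differentiable near x̄, x̄ ∈ D, g(x̄) ∈ K, and either D is directionally regular at x̄ or K is directionally regular at g(x̄). Then rg[F](x̄,0) = inf{ max(‖u*‖_*, ‖v‖) : u* + ∇g(x̄)ᵀv* ∈ N̄_D(x̄;u), −v* ∈ N̄_K(g(x̄); v + ∇g(x̄)u), ‖u‖ = ‖v*‖_* = 1 }. -/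

import Mathlib

open Filter Topology Set ENNReal NNReal

noncomputable section

variable {E Y : Type*} [NormedAddCommGroup E] [NormedSpace ℝ E]
  [NormedAddCommGroup Y] [NormedSpace ℝ Y]

/-- The tangent (Bouligand) cone to `A` at `x`:
`T_A(x) := {u : ∃ uᵢ → u, tᵢ ↓ 0 with x + tᵢ uᵢ ∈ A}`. -/
def tangentConeB (A : Set E) (x : E) : Set E :=
  {u | ∃ (t : ℕ → ℝ) (c : ℕ → E), (∀ i, 0 < t i) ∧ Tendsto t atTop (𝓝 0) ∧
    Tendsto c atTop (𝓝 u) ∧ ∀ i, x + t i • c i ∈ A}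

/-- The Fréchet normal cone to `A` at `x` (empty outside `A`):
the polar of the tangent cone. -/
def frechetNC (A : Set E) (x : E) : Set (E →L[ℝ] ℝ) :=
  {p | x ∈ A ∧ ∀ u ∈ tangentConeB A x, p u ≤ 0}

/-- The limiting normal cone to `A` at `x`. -/
def limitingNC (A : Set E) (x : E) : Set (E →L[ℝ] ℝ) :=
  {p | ∃ (xs : ℕ → E) (ps : ℕ → E →L[ℝ] ℝ),
    Tendsto xs atTop (𝓝 x) ∧ Tendsto ps atTop (𝓝 p) ∧
    ∀ i, ps i ∈ frechetNC A (xs i)}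

/-- The directional limiting normal cone to `A` at `x` in the direction `u`. -/
def dirLimitingNC (A : Set E) (x u : E) : Set (E →L[ℝ] ℝ) :=
  {p | ∃ (t : ℕ → ℝ) (us : ℕ → E) (ps : ℕ → (E →L[ℝ] ℝ)),
    (∀ i, 0 < t i) ∧ Tendsto t atTop (𝓝 0) ∧ Tendsto us atTop (𝓝 u) ∧
    Tendsto ps atTop (𝓝 p) ∧ ∀ i, ps i ∈ frechetNC A (x + t i • us i)}

/-- `A` is directionally regular at `x` in the direction `u`. -/
def DirRegularAt (A : Set E) (x u : E) : Prop :=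
  dirLimitingNC A x u =
    {p | ∀ (t : ℕ → ℝ), (∀ i, 0 < t i) → Tendsto t atTop (𝓝 0) →
      ∃ (us : ℕ → E) (ps : ℕ → (E →L[ℝ] ℝ)), Tendsto us atTop (𝓝 u) ∧
        Tendsto ps atTop (𝓝 p) ∧ ∀ i, ps i ∈ frechetNC A (x + t i • us i)}

/-- `A` is directionally regular at `x` (in all directions). -/
def DirRegular (A : Set E) (x : E) : Prop := ∀ u, DirRegularAt A x u

/-- The pair `(u*, v*)` viewed as a linear functional on `E × Y`. -/
def pairFun (us : E →L[ℝ] ℝ) (vs : Y →L[ℝ] ℝ) : (E × Y) →L[ℝ] ℝ :=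
  us.coprod vs

/-- The primal-dual derivative of the mapping with graph `G` at `z ∈ G`:
`D̂F(xb,yb)(u,v*) := {(u*,v) : (u*,−v*) ∈ N̄_{gph F}((xb,yb);(u,v))}`. -/
def pdDeriv (G : Set (E × Y)) (z : E × Y) (u : E) (vs : Y →L[ℝ] ℝ) :
    Set ((E →L[ℝ] ℝ) × Y) :=
  {w | pairFun w.1 (-vs) ∈ dirLimitingNC G z (u, w.2)}

/-- `rg[F](xb,yb)`. -/
def rgL (G : Set (E × Y)) (z : E × Y) : ℝ≥0∞ :=
  ⨅ (u : E) (vs : Y →L[ℝ] ℝ) (w : (E →L[ℝ] ℝ) × Y) (_ : ‖u‖ = 1)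
    (_ : ‖vs‖ = 1) (_ : w ∈ pdDeriv G z u vs),
    ENNReal.ofReal (max ‖w.1‖ ‖w.2‖)

/-- `rg⋄[F](xb,yb)`. -/
def rgDiamond (G : Set (E × Y)) (z : E × Y) : ℝ≥0∞ :=
  ⨅ (u : E) (vs : Y →L[ℝ] ℝ) (w : (E →L[ℝ] ℝ) × Y) (_ : ‖u‖ = 1)
    (_ : ‖vs‖ = 1) (_ : w ∈ pdDeriv G z u vs) (_ : w.1 u = vs w.2),
    ENNReal.ofReal (max ‖w.1‖ ‖w.2‖)

/-- `rg°[F](xb,yb)`. -/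
def rgCirc (G : Set (E × Y)) (z : E × Y) : ℝ≥0∞ :=
  ⨅ (u : E) (vs : Y →L[ℝ] ℝ) (B : E →L[ℝ] Y) (_ : ‖u‖ = 1) (_ : ‖vs‖ = 1)
    (_ : (vs.comp B, B u) ∈ pdDeriv G z u vs),
    ENNReal.ofReal ‖B‖

/-- `r̂g[F](xb,yb)`. -/
def rgHat (G : Set (E × Y)) (z : E × Y) : ℝ≥0∞ :=
  ⨅ (u : E) (vs : Y →L[ℝ] ℝ) (w : (E →L[ℝ] ℝ) × Y) (_ : ‖u‖ = 1)
    (_ : ‖vs‖ = 1) (_ : w ∈ pdDeriv G z u vs),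
    ENNReal.ofReal (‖w.1‖ + ‖w.2‖)

/-- `rg†[F](xb,yb)` (intended for the Euclidean setting). -/
def rgDagger (G : Set (E × Y)) (z : E × Y) : ℝ≥0∞ :=
  ⨅ (u : E) (vs : Y →L[ℝ] ℝ) (w : (E →L[ℝ] ℝ) × Y) (_ : ‖u‖ = 1)
    (_ : ‖vs‖ = 1) (_ : w ∈ pdDeriv G z u vs) (_ : w.1 u = vs w.2),
    ENNReal.ofReal (Real.sqrt (‖w.1‖ ^ 2 + ‖w.2‖ ^ 2 - (w.1 u) ^ 2))

/-- Metric subregularity at `xb` for `yb` of the mapping with graph `G`. -/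
def MetricSubregAt (G : Set (E × Y)) (xb : E) (yb : Y) : Prop :=
  (xb, yb) ∈ G ∧ ∃ κ : ℝ≥0, ∃ U ∈ 𝓝 xb, ∀ x ∈ U,
    EMetric.infEdist x {x' | (x', yb) ∈ G} ≤
      (κ : ℝ≥0∞) * EMetric.infEdist yb {y | (x, y) ∈ G}

/-- The graph of `F + h`, where `G` is the graph of `F`. -/
def sumGraph (G : Set (E × Y)) (h : E → Y) : Set (E × Y) :=
  {p | (p.1, p.2 - h p.1) ∈ G}

/-- `h` is Lipschitz continuous around `xb`. -/
def LipschitzAround (h : E → Y) (xb : E) : Prop :=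
  ∃ K : ℝ≥0, ∃ U ∈ 𝓝 xb, LipschitzOnWith K h U

/-- The Lipschitz modulus `lip(h;xb)`. -/
def lipMod (h : E → Y) (xb : E) : ℝ≥0∞ :=
  Filter.limsup (fun p : E × E => ENNReal.ofReal (‖h p.1 - h p.2‖ / ‖p.1 - p.2‖))
    ((𝓝 xb ×ˢ 𝓝 xb) ⊓ 𝓟 {p : E × E | p.1 ≠ p.2})

/-- The radius of metric subregularity w.r.t. Lipschitz perturbations. -/
def radLip (G : Set (E × Y)) (xb : E) (yb : Y) : ℝ≥0∞ :=
  ⨅ (h : E → Y) (_ : LipschitzAround h xb) (_ : h xb = 0)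
    (_ : ¬ MetricSubregAt (sumGraph G h) xb yb), lipMod h xb

/-- The Clarke generalized Jacobian of `h` at `x`. -/
def clarkeJac (h : E → Y) (x : E) : Set (E →L[ℝ] Y) :=
  convexHull ℝ {B | ∃ xs : ℕ → E, Tendsto xs atTop (𝓝 x) ∧
    (∀ i, DifferentiableAt ℝ h (xs i)) ∧
    Tendsto (fun i => fderiv ℝ h (xs i)) atTop (𝓝 B)}

/-- `h` is semismooth at `xb`. -/
def SemismoothAt (h : E → Y) (xb : E) : Prop :=
  LipschitzAround h xb ∧
  ∀ u : E, ∃ L : Y, ∀ (t : ℕ → ℝ) (us : ℕ → E) (V : ℕ → E →L[ℝ] Y),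
    (∀ i, 0 < t i) → Tendsto t atTop (𝓝 0) → Tendsto us atTop (𝓝 u) →
    (∀ i, V i ∈ clarkeJac h (xb + t i • us i)) →
    Tendsto (fun i => V i (us i)) atTop (𝓝 L)

/-- `h` is continuously differentiable around `xb`. -/
def C1Around (h : E → Y) (xb : E) : Prop :=
  ∃ U ∈ 𝓝 xb, ContDiffOn ℝ 1 h U

/-- The radius of metric subregularity w.r.t. semismooth perturbations. -/
def radSS (G : Set (E × Y)) (xb : E) (yb : Y) : ℝ≥0∞ :=
  ⨅ (h : E → Y) (_ : SemismoothAt h xb) (_ : h xb = 0)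
    (_ : ¬ MetricSubregAt (sumGraph G h) xb yb), lipMod h xb

/-- The radius of metric subregularity w.r.t. `C¹` perturbations. -/
def radC1 (G : Set (E × Y)) (xb : E) (yb : Y) : ℝ≥0∞ :=
  ⨅ (h : E → Y) (_ : C1Around h xb) (_ : h xb = 0)
    (_ : ¬ MetricSubregAt (sumGraph G h) xb yb), lipMod h xb



section Aux

variable {D : Set E} {K : Set Y} {g : E → Y}

/-- Difference quotients along a sequence converge to the derivative. -/
lemma slope_tendsto {g : E → Y} {x : E} {f : E →L[ℝ] Y} (hg : HasFDerivAt g f x)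
    {t : ℕ → ℝ} {c : ℕ → E} {a : E} (ht0 : ∀ i, 0 < t i)
    (ht : Tendsto t atTop (𝓝 0)) (hc : Tendsto c atTop (𝓝 a)) :
    Tendsto (fun i => (t i)⁻¹ • (g (x + t i • c i) - g x)) atTop (𝓝 (f a)) := by
  have hL := hasFDerivAt_iff_isLittleO_nhds_zero.1 hg
  have hh : Tendsto (fun i => t i • c i) atTop (𝓝 0) := by
    simpa using ht.smul hc
  have key : Tendsto (fun i => (t i)⁻¹ • (g (x + t i • c i) - g x - f (t i • c i))) atTop (𝓝 0) := by
    rw [NormedAddCommGroup.tendsto_nhds_zero]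
    intro ε hε
    set M : ℝ := ‖a‖ + 1 with hM
    have hMpos : 0 < M := by positivity
    have hcb : ∀ᶠ i in atTop, ‖c i‖ < M := hc.norm.eventually_lt_const (by simp [hM])
    have hδ : ∀ᶠ h in 𝓝 (0:E), ‖g (x + h) - g x - f h‖ ≤ (ε / (2 * M)) * ‖h‖ :=
      hL.bound (by positivity)
    filter_upwards [hh.eventually hδ, hcb] with i h1 h2
    have hti := ht0 i
    have hb : ‖(t i)⁻¹ • (g (x + t i • c i) - g x - f (t i • c i))‖
        ≤ (ε / (2 * M)) * ‖c i‖ := by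
      rw [norm_smul, norm_inv, Real.norm_eq_abs, abs_of_pos hti]
      calc (t i)⁻¹ * ‖g (x + t i • c i) - g x - f (t i • c i)‖
          ≤ (t i)⁻¹ * ((ε / (2 * M)) * ‖t i • c i‖) := by
            apply mul_le_mul_of_nonneg_left h1 (by positivity)
        _ = (ε / (2 * M)) * ‖c i‖ := by
            rw [norm_smul, Real.norm_eq_abs, abs_of_pos hti]; field_simp
    calc ‖(t i)⁻¹ • (g (x + t i • c i) - g x - f (t i • c i))‖
        ≤ (ε / (2 * M)) * ‖c i‖ := hb
      _ < (ε / (2 * M)) * M := by apply mul_lt_mul_of_pos_left h2 (by positivity)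
      _ = ε / 2 := by field_simp
      _ < ε := by linarith
  have hfc : Tendsto (fun i => f (c i)) atTop (𝓝 (f a)) := (f.continuous.tendsto a).comp hc
  have h2 := key.add hfc
  rw [zero_add] at h2
  refine h2.congr fun i => ?_
  have hne : t i ≠ 0 := (ht0 i).ne'
  rw [smul_sub, ContinuousLinearMap.map_smul, inv_smul_smul₀ hne, sub_add_cancel]

@[simp] lemma pairFun_apply (p : E →L[ℝ] ℝ) (q : Y →L[ℝ] ℝ) (z : E × Y) :
    pairFun p q z = p z.1 + q z.2 := rfl

lemma pairFun_eq (p : E →L[ℝ] ℝ) (q : Y →L[ℝ] ℝ) :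
    pairFun p q = p.comp (ContinuousLinearMap.fst ℝ E Y)
      + q.comp (ContinuousLinearMap.snd ℝ E Y) := by
  ext z <;> simp [pairFun]

@[simp] lemma pairFun_comp_inl (p : E →L[ℝ] ℝ) (q : Y →L[ℝ] ℝ) :
    (pairFun p q).comp (ContinuousLinearMap.inl ℝ E Y) = p := by
  ext z; simp [pairFun]

@[simp] lemma pairFun_comp_inr (p : E →L[ℝ] ℝ) (q : Y →L[ℝ] ℝ) :
    (pairFun p q).comp (ContinuousLinearMap.inr ℝ E Y) = q := by
  ext z; simp [pairFun]

lemma tendsto_clm_comp₂ {F G X : Type*} [NormedAddCommGroup F] [NormedSpace ℝ F]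
    [NormedAddCommGroup G] [NormedSpace ℝ G] [NormedAddCommGroup X] [NormedSpace ℝ X]
    {p : ℕ → F →L[ℝ] G} {P : F →L[ℝ] G} {B : ℕ → X →L[ℝ] F} {Bb : X →L[ℝ] F}
    (hp : Tendsto p atTop (𝓝 P)) (hB : Tendsto B atTop (𝓝 Bb)) :
    Tendsto (fun i => (p i).comp (B i)) atTop (𝓝 (P.comp Bb)) :=
  ((isBoundedBilinearMap_comp (𝕜 := ℝ)).continuous.tendsto (P, Bb)).comp
    (hp.prodMk_nhds hB)

lemma tendsto_pairFun {P : ℕ → E →L[ℝ] ℝ} {Q : ℕ → Y →L[ℝ] ℝ}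
    {P0 : E →L[ℝ] ℝ} {Q0 : Y →L[ℝ] ℝ}
    (hP : Tendsto P atTop (𝓝 P0)) (hQ : Tendsto Q atTop (𝓝 Q0)) :
    Tendsto (fun i => pairFun (P i) (Q i)) atTop (𝓝 (pairFun P0 Q0)) := by
  simp only [pairFun_eq]
  exact (tendsto_clm_comp₂ hP tendsto_const_nhds).add (tendsto_clm_comp₂ hQ tendsto_const_nhds)

/-- Sum rule inclusion for the Fréchet normal cone of the constraint graph. -/
lemma frechet_sum {x : E} {y : Y} {f : E →L[ℝ] Y} (hg : HasFDerivAt g f x)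
    {p : E →L[ℝ] ℝ} {q : Y →L[ℝ] ℝ}
    (hp : p ∈ frechetNC D x) (hq : q ∈ frechetNC K (g x + y)) :
    pairFun (p + q.comp f) q ∈ frechetNC {z : E × Y | z.1 ∈ D ∧ g z.1 + z.2 ∈ K} (x, y) := by
  refine ⟨⟨hp.1, hq.1⟩, ?_⟩
  rintro ⟨a, b⟩ ⟨t, c, ht0, ht, hc, hmem⟩
  have hc1 : Tendsto (fun i => (c i).1) atTop (𝓝 a) := (continuous_fst.tendsto _).comp hc
  have hc2 : Tendsto (fun i => (c i).2) atTop (𝓝 b) := (continuous_snd.tendsto _).comp hc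
  have hmemD : ∀ i, x + t i • (c i).1 ∈ D := fun i => (hmem i).1
  have hmemK : ∀ i, g (x + t i • (c i).1) + (y + t i • (c i).2) ∈ K := fun i => (hmem i).2
  have haD : a ∈ tangentConeB D x := ⟨t, fun i => (c i).1, ht0, ht, hc1, hmemD⟩
  have hbK : f a + b ∈ tangentConeB K (g x + y) := by
    refine ⟨t, fun i => (t i)⁻¹ • (g (x + t i • (c i).1) - g x) + (c i).2, ht0, ht,
      (slope_tendsto hg ht0 ht hc1).add hc2, fun i => ?_⟩
    have hne : t i ≠ 0 := (ht0 i).ne'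
    have : g x + y + t i • ((t i)⁻¹ • (g (x + t i • (c i).1) - g x) + (c i).2)
        = g (x + t i • (c i).1) + (y + t i • (c i).2) := by
      rw [smul_add, smul_inv_smul₀ hne]; abel
    rw [this]; exact hmemK i
  have h1 : p a ≤ 0 := hp.2 a haD
  have h2 : q (f a + b) ≤ 0 := hq.2 _ hbK
  have : pairFun (p + q.comp f) q (a, b) = p a + q (f a + b) := by
    simp [pairFun]; ring
  rw [this]; linarith

/-- Decomposition of Fréchet normals to the constraint graph. -/
lemma frechet_decomp {x : E} {y : Y} {f : E →L[ℝ] Y} (hg : HasFDerivAt g f x)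
    {r : (E × Y) →L[ℝ] ℝ}
    (hr : r ∈ frechetNC {z : E × Y | z.1 ∈ D ∧ g z.1 + z.2 ∈ K} (x, y)) :
    (r.comp (ContinuousLinearMap.inl ℝ E Y)
        - (r.comp (ContinuousLinearMap.inr ℝ E Y)).comp f ∈ frechetNC D x)
      ∧ r.comp (ContinuousLinearMap.inr ℝ E Y) ∈ frechetNC K (g x + y) := by
  obtain ⟨⟨hxD, hxK⟩, hr2⟩ := hr
  constructor
  · refine ⟨hxD, ?_⟩
    rintro a ⟨t, c, ht0, ht, hc, hmem⟩
    have htan : ((a, -f a) : E × Y) ∈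
        tangentConeB {z : E × Y | z.1 ∈ D ∧ g z.1 + z.2 ∈ K} (x, y) := by
      refine ⟨t, fun i => (c i, -((t i)⁻¹ • (g (x + t i • c i) - g x))), ht0, ht,
        hc.prodMk_nhds (slope_tendsto hg ht0 ht hc).neg, fun i => ?_⟩
      have hne : t i ≠ 0 := (ht0 i).ne'
      constructor
      · exact hmem i
      · show g (x + t i • c i) + (y + t i • -((t i)⁻¹ • (g (x + t i • c i) - g x))) ∈ K
        have : g (x + t i • c i) + (y + t i • -((t i)⁻¹ • (g (x + t i • c i) - g x)))
            = g x + y := by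
          rw [smul_neg, smul_inv_smul₀ hne]; abel
        rw [this]; exact hxK
    have h := hr2 _ htan
    have heq : ((a, -f a) : E × Y) = (a, 0) + -((0:E), f a) := by
      simp [Prod.ext_iff]
    rw [heq, map_add, map_neg] at h
    simp only [ContinuousLinearMap.sub_apply, ContinuousLinearMap.comp_apply,
      ContinuousLinearMap.inl_apply, ContinuousLinearMap.inr_apply]
    linarith
  · refine ⟨hxK, ?_⟩
    rintro b ⟨t, d, ht0, ht, hd, hmem⟩
    have htan : ((0, b) : E × Y) ∈
        tangentConeB {z : E × Y | z.1 ∈ D ∧ g z.1 + z.2 ∈ K} (x, y) := by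
      refine ⟨t, fun i => (0, d i), ht0, ht,
        tendsto_const_nhds.prodMk_nhds hd, fun i => ?_⟩
      constructor
      · show x + t i • (0:E) ∈ D; simpa using hxD
      · show g (x + t i • (0:E)) + (y + t i • d i) ∈ K
        have : g (x + t i • (0:E)) + (y + t i • d i) = g x + y + t i • d i := by
          simp; abel
        rw [this]; exact hmem i
    have := hr2 _ htan
    simpa using this

/-- Construction of a directional limiting normal of the constraint graph from
separate directional limiting normals of `D` and `K` sharing a common time scale. -/
lemma construct_mem {xb : E} {V : Set E}
    (hV : IsOpen V) (hxbV : xb ∈ V)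
    (hdiff : ∀ x ∈ V, HasFDerivAt g (fderiv ℝ g x) x)
    (hcont : ContinuousAt (fun x => fderiv ℝ g x) xb)
    {u : E} {v : Y} {us : E →L[ℝ] ℝ} {vs : Y →L[ℝ] ℝ}
    {s : ℕ → ℝ} {uu : ℕ → E} {ws : ℕ → Y} {ps : ℕ → E →L[ℝ] ℝ} {qs : ℕ → Y →L[ℝ] ℝ}
    (hs0 : ∀ i, 0 < s i) (hs : Tendsto s atTop (𝓝 0))
    (huu : Tendsto uu atTop (𝓝 u))
    (hws : Tendsto ws atTop (𝓝 (v + fderiv ℝ g xb u)))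
    (hps : Tendsto ps atTop (𝓝 (us + vs.comp (fderiv ℝ g xb))))
    (hqs : Tendsto qs atTop (𝓝 (-vs)))
    (hmemD : ∀ i, ps i ∈ frechetNC D (xb + s i • uu i))
    (hmemK : ∀ i, qs i ∈ frechetNC K (g xb + s i • ws i)) :
    pairFun us (-vs) ∈
      dirLimitingNC {z : E × Y | z.1 ∈ D ∧ g z.1 + z.2 ∈ K} (xb, 0) (u, v) := by
  have hx : Tendsto (fun i => xb + s i • uu i) atTop (𝓝 xb) := by
    simpa using (tendsto_const_nhds : Tendsto (fun _ : ℕ => xb) atTop (𝓝 xb)).add (hs.smul huu)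
  have hev : ∀ᶠ i in atTop, xb + s i • uu i ∈ V := hx (hV.mem_nhds hxbV)
  obtain ⟨N, hN⟩ := eventually_atTop.1 hev
  set x' : ℕ → E := fun i => xb + s (i + N) • uu (i + N) with hx'def
  have hx'V : ∀ i, x' i ∈ V := fun i => hN (i + N) (Nat.le_add_left N i)
  have hs' := (tendsto_add_atTop_iff_nat (f := s) N).2 hs
  have huu' := (tendsto_add_atTop_iff_nat (f := uu) N).2 huu
  have hws' := (tendsto_add_atTop_iff_nat (f := ws) N).2 hws
  have hps' := (tendsto_add_atTop_iff_nat (f := ps) N).2 hps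
  have hqs' := (tendsto_add_atTop_iff_nat (f := qs) N).2 hqs
  have hx' : Tendsto x' atTop (𝓝 xb) :=
    (tendsto_add_atTop_iff_nat (f := fun i => xb + s i • uu i) N).2 hx
  refine ⟨fun i => s (i + N),
    fun i => (uu (i + N), ws (i + N) - (s (i + N))⁻¹ • (g (x' i) - g xb)),
    fun i => pairFun (ps (i + N) + (qs (i + N)).comp (fderiv ℝ g (x' i))) (qs (i + N)),
    fun i => hs0 _, hs', ?_, ?_, ?_⟩
  · refine huu'.prodMk_nhds ?_
    have hslope : Tendsto (fun i => (s (i + N))⁻¹ • (g (x' i) - g xb)) atTop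
        (𝓝 (fderiv ℝ g xb u)) :=
      slope_tendsto (hdiff xb hxbV) (fun i => hs0 _) hs' huu'
    have := hws'.sub hslope
    simpa using this
  · have hfd : Tendsto (fun i => fderiv ℝ g (x' i)) atTop (𝓝 (fderiv ℝ g xb)) :=
      hcont.tendsto.comp hx'
    have h1 : Tendsto (fun i => ps (i + N) + (qs (i + N)).comp (fderiv ℝ g (x' i))) atTop
        (𝓝 ((us + vs.comp (fderiv ℝ g xb)) + (-vs).comp (fderiv ℝ g xb))) :=
      hps'.add (tendsto_clm_comp₂ hqs' hfd)
    have heq : (us + vs.comp (fderiv ℝ g xb)) + (-vs).comp (fderiv ℝ g xb) = us := by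
      ext z; simp
    rw [heq] at h1
    exact tendsto_pairFun h1 hqs'
  · intro i
    have hpt : ((xb, (0:Y)) + s (i + N) •
          (uu (i + N), ws (i + N) - (s (i + N))⁻¹ • (g (x' i) - g xb)))
        = (x' i, s (i + N) • ws (i + N) - (g (x' i) - g xb)) := by
      have hne : s (i + N) ≠ 0 := (hs0 _).ne'
      rw [Prod.ext_iff]
      refine ⟨rfl, ?_⟩
      show (0:Y) + s (i + N) • (ws (i + N) - (s (i + N))⁻¹ • (g (x' i) - g xb))
          = s (i + N) • ws (i + N) - (g (x' i) - g xb)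
      rw [zero_add, smul_sub, smul_inv_smul₀ hne]
    rw [hpt]
    have hKpt : g (x' i) + (s (i + N) • ws (i + N) - (g (x' i) - g xb))
        = g xb + s (i + N) • ws (i + N) := by abel
    have hqmem : qs (i + N) ∈ frechetNC K
        (g (x' i) + (s (i + N) • ws (i + N) - (g (x' i) - g xb))) := by
      rw [hKpt]; exact hmemK (i + N)
    exact frechet_sum (hdiff _ (hx'V i)) (hmemD (i + N)) hqmem

end Aux

/-- representation of `rg[F](xb,0)` for the constraint system
`x ∈ D`, `g(x) ∈ K`, with `F(x) = K - g(x)` for `x ∈ D` and `∅` otherwise. -/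
theorem statement17 [FiniteDimensional ℝ E] [FiniteDimensional ℝ Y]
    (D : Set E) (K : Set Y) (hD : IsClosed D) (hK : IsClosed K)
    (g : E → Y) (xb : E) (hxb : xb ∈ D) (hgxb : g xb ∈ K)
    (hC1 : ∃ U ∈ 𝓝 xb, ContDiffOn ℝ 1 g U)
    (hreg : DirRegular D xb ∨ DirRegular K (g xb)) :
    rgL {p : E × Y | p.1 ∈ D ∧ g p.1 + p.2 ∈ K} (xb, 0) =
      ⨅ (u : E) (vs : Y →L[ℝ] ℝ) (us : E →L[ℝ] ℝ) (v : Y)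
        (_ : ‖u‖ = 1) (_ : ‖vs‖ = 1)
        (_ : us + vs.comp (fderiv ℝ g xb) ∈ dirLimitingNC D xb u)
        (_ : -vs ∈ dirLimitingNC K (g xb) (v + fderiv ℝ g xb u)),
        ENNReal.ofReal (max ‖us‖ ‖v‖) := by
  obtain ⟨U, hU, hgC1⟩ := hC1
  obtain ⟨V, hVU, hVopen, hxbV⟩ := mem_nhds_iff.1 hU
  have hgV : ContDiffOn ℝ 1 g V := hgC1.mono hVU
  have hdiff : ∀ x ∈ V, HasFDerivAt g (fderiv ℝ g x) x := fun x hx =>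
    ((hgV.differentiableOn one_ne_zero).differentiableAt (hVopen.mem_nhds hx)).hasFDerivAt
  have hcont : ContinuousAt (fun x => fderiv ℝ g x) xb :=
    (hgV.continuousOn_fderiv_of_isOpen hVopen le_rfl).continuousAt (hVopen.mem_nhds hxbV)
  refine le_antisymm ?_ ?_
  · -- rgL ≤ RHS
    refine le_iInf fun u => le_iInf fun vs => le_iInf fun us => le_iInf fun v =>
      le_iInf fun hu => le_iInf fun hvs => le_iInf fun hDm => le_iInf fun hKm => ?_
    have hw : (us, v) ∈ pdDeriv {p : E × Y | p.1 ∈ D ∧ g p.1 + p.2 ∈ K} (xb, 0) u vs := by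
      show pairFun us (-vs) ∈
        dirLimitingNC {p : E × Y | p.1 ∈ D ∧ g p.1 + p.2 ∈ K} (xb, 0) (u, v)
      rcases hreg with hregD | hregK
      · obtain ⟨s, ws, qs, hs0, hs, hws, hqs, hmemK⟩ := hKm
        have h1 := hregD u
        unfold DirRegularAt at h1
        rw [h1] at hDm
        obtain ⟨uu, ps, huu, hps, hmemD⟩ := hDm s hs0 hs
        exact construct_mem hVopen hxbV hdiff hcont hs0 hs huu hws hps hqs hmemD hmemK
      · obtain ⟨s, uu, ps, hs0, hs, huu, hps, hmemD⟩ := hDm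
        have h1 := hregK (v + fderiv ℝ g xb u)
        unfold DirRegularAt at h1
        rw [h1] at hKm
        obtain ⟨ws, qs, hws, hqs, hmemK⟩ := hKm s hs0 hs
        exact construct_mem hVopen hxbV hdiff hcont hs0 hs huu hws hps hqs hmemD hmemK
    exact iInf_le_of_le u <| iInf_le_of_le vs <| iInf_le_of_le (us, v) <|
      iInf_le_of_le hu <| iInf_le_of_le hvs <| iInf_le_of_le hw le_rfl
  · -- RHS ≤ rgL
    refine le_iInf fun u => le_iInf fun vs => le_iInf fun w => le_iInf fun hu =>
      le_iInf fun hvs => le_iInf fun hw => ?_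
    have hw' : pairFun w.1 (-vs) ∈
        dirLimitingNC {p : E × Y | p.1 ∈ D ∧ g p.1 + p.2 ∈ K} (xb, 0) (u, w.2) := hw
    obtain ⟨t, cs, rs, ht0, ht, hcs, hrs, hmem⟩ := hw'
    have hc1 : Tendsto (fun i => (cs i).1) atTop (𝓝 u) := (continuous_fst.tendsto _).comp hcs
    have hc2 : Tendsto (fun i => (cs i).2) atTop (𝓝 w.2) := (continuous_snd.tendsto _).comp hcs
    have hx : Tendsto (fun i => xb + t i • (cs i).1) atTop (𝓝 xb) := by
      simpa using (tendsto_const_nhds : Tendsto (fun _ : ℕ => xb) atTop (𝓝 xb)).add (ht.smul hc1)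
    have hev : ∀ᶠ i in atTop, xb + t i • (cs i).1 ∈ V := hx (hVopen.mem_nhds hxbV)
    obtain ⟨N, hN⟩ := eventually_atTop.1 hev
    set x' : ℕ → E := fun i => xb + t (i + N) • (cs (i + N)).1 with hx'def
    have hx'V : ∀ i, x' i ∈ V := fun i => hN (i + N) (Nat.le_add_left N i)
    have ht0' : ∀ i, 0 < t (i + N) := fun i => ht0 _
    have ht' := (tendsto_add_atTop_iff_nat (f := t) N).2 ht
    have hc1' := (tendsto_add_atTop_iff_nat (f := fun i => (cs i).1) N).2 hc1
    have hc2' := (tendsto_add_atTop_iff_nat (f := fun i => (cs i).2) N).2 hc2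
    have hrs' := (tendsto_add_atTop_iff_nat (f := rs) N).2 hrs
    have hx' : Tendsto x' atTop (𝓝 xb) :=
      (tendsto_add_atTop_iff_nat (f := fun i => xb + t i • (cs i).1) N).2 hx
    have hmem' : ∀ i, rs (i + N) ∈ frechetNC {p : E × Y | p.1 ∈ D ∧ g p.1 + p.2 ∈ K}
        (x' i, t (i + N) • (cs (i + N)).2) := by
      intro i
      have heq : ((xb, (0:Y)) + t (i + N) • cs (i + N))
          = (x' i, t (i + N) • (cs (i + N)).2) := by
        rw [Prod.ext_iff]
        exact ⟨rfl, zero_add _⟩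
      have := hmem (i + N)
      rwa [heq] at this
    have hdec := fun i => frechet_decomp (D := D) (K := K) (g := g)
      (hdiff _ (hx'V i)) (hmem' i)
    have hfd : Tendsto (fun i => fderiv ℝ g (x' i)) atTop (𝓝 (fderiv ℝ g xb)) :=
      hcont.tendsto.comp hx'
    have hq : Tendsto (fun i => (rs (i + N)).comp (ContinuousLinearMap.inr ℝ E Y)) atTop
        (𝓝 (-vs)) := by
      have := tendsto_clm_comp₂ hrs'
        (tendsto_const_nhds : Tendsto (fun _ : ℕ => ContinuousLinearMap.inr ℝ E Y) atTop _)
      rwa [pairFun_comp_inr] at this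
    have hp : Tendsto (fun i => (rs (i + N)).comp (ContinuousLinearMap.inl ℝ E Y)
        - ((rs (i + N)).comp (ContinuousLinearMap.inr ℝ E Y)).comp (fderiv ℝ g (x' i)))
        atTop (𝓝 (w.1 + vs.comp (fderiv ℝ g xb))) := by
      have h1 := tendsto_clm_comp₂ hrs'
        (tendsto_const_nhds : Tendsto (fun _ : ℕ => ContinuousLinearMap.inl ℝ E Y) atTop _)
      rw [pairFun_comp_inl] at h1
      have h2 := tendsto_clm_comp₂ hq hfd
      have h3 := h1.sub h2
      have heq : w.1 - (-vs).comp (fderiv ℝ g xb) = w.1 + vs.comp (fderiv ℝ g xb) := by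
        ext z; simp [sub_eq_add_neg]
      rwa [heq] at h3
    have hDmem : w.1 + vs.comp (fderiv ℝ g xb) ∈ dirLimitingNC D xb u :=
      ⟨fun i => t (i + N), fun i => (cs (i + N)).1,
        fun i => (rs (i + N)).comp (ContinuousLinearMap.inl ℝ E Y)
          - ((rs (i + N)).comp (ContinuousLinearMap.inr ℝ E Y)).comp (fderiv ℝ g (x' i)),
        ht0', ht', hc1', hp, fun i => (hdec i).1⟩
    have hKmem : -vs ∈ dirLimitingNC K (g xb) (w.2 + fderiv ℝ g xb u) := by
      refine ⟨fun i => t (i + N),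
        fun i => (t (i + N))⁻¹ • (g (x' i) - g xb) + (cs (i + N)).2,
        fun i => (rs (i + N)).comp (ContinuousLinearMap.inr ℝ E Y),
        ht0', ht', ?_, hq, ?_⟩
      · have := (slope_tendsto (hdiff xb hxbV) ht0' ht' hc1').add hc2'
        rwa [add_comm] at this
      · intro i
        have hne : t (i + N) ≠ 0 := (ht0 _).ne'
        have heq : g xb + t (i + N) •
            ((t (i + N))⁻¹ • (g (x' i) - g xb) + (cs (i + N)).2)
            = g (x' i) + t (i + N) • (cs (i + N)).2 := by
          rw [smul_add, smul_inv_smul₀ hne]; abel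
        rw [heq]
        exact (hdec i).2
    exact iInf_le_of_le u <| iInf_le_of_le vs <| iInf_le_of_le w.1 <| iInf_le_of_le w.2 <|
      iInf_le_of_le hu <| iInf_le_of_le hvs <| iInf_le_of_le hDmem <|
      iInf_le_of_le hKmem le_rfl

end
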